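/- Let h : ℝ^N → ℝ be convex and g : ℝ^N → ℝ be continuous. Suppose min_x h(x) has nonempty solution set H with γ := inf{g(x) : x ∈ H} > −∞, and let τ ≤ γ. Suppose the problem min{h(x) : g(x) ≤ τ} has a nonempty solution set H_P. Then g(x) = τ for every x ∈ H_P. -/

import Mathlib

/-- Lemma 5.3: if `τ ≤ inf{g(x) : x ∈ argmin h}`, then every minimizer of `h` over
`{x : g(x) ≤ τ}` satisfies `g(x) = τ`. -/
theorem constraint_active_at_optimum
    (N : ℕ) (h : (Fin N → ℝ) → ℝ) (g : (Fin N → ℝ) → ℝ)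
    (hconv : ConvexOn ℝ Set.univ h) (hcont : Continuous g)
    (H : Set (Fin N → ℝ)) (hHdef : H = {x | ∀ z, h x ≤ h z}) (hHne : H.Nonempty)
    (γ : ℝ) (hγ : IsGLB (g '' H) γ) (τ : ℝ) (hτ : τ ≤ γ)
    (HP : Set (Fin N → ℝ))
    (hHPdef : HP = {x | g x ≤ τ ∧ ∀ z, g z ≤ τ → h x ≤ h z}) (hHPne : HP.Nonempty) :
    ∀ x ∈ HP, g x = τ := by
  intro x hx
  subst hHdef hHPdef
  obtain ⟨hgx, hopt⟩ := hx
  refine le_antisymm hgx (le_of_not_gt fun hlt => ?_)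
  obtain ⟨y, hy⟩ := hHne
  -- case: x is itself a global minimizer
  by_cases hxy : h x ≤ h y
  · have hxH : x ∈ {x | ∀ z, h x ≤ h z} := fun z => le_trans hxy (hy z)
    have : γ ≤ g x := hγ.1 ⟨x, hxH, rfl⟩
    exact absurd (lt_of_lt_of_le hlt hτ) (not_lt.2 this)
  · push_neg at hxy
    set φ : ℝ → (Fin N → ℝ) := fun t => (1 - t) • x + t • y with hφdef
    have hφcont : Continuous φ := by
      exact ((continuous_const.sub continuous_id).smul continuous_const).add
        (continuous_id.smul continuous_const)
    have h0 : φ 0 = x := by simp [hφdef]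
    have htend : Filter.Tendsto (fun t => g (φ t)) (nhds 0) (nhds (g x)) := by
      have := (hcont.comp hφcont).continuousAt (x := (0 : ℝ))
      simpa [h0, ContinuousAt, Function.comp_def] using this
    have hev : ∀ᶠ t in nhds (0 : ℝ), g (φ t) < τ := htend.eventually_lt_const hlt
    have hev2 : ∀ᶠ t in nhdsWithin (0 : ℝ) (Set.Ioi 0),
        g (φ t) < τ ∧ t < 1 ∧ 0 < t := by
      have h1 : ∀ᶠ t in nhds (0 : ℝ), t < 1 := Filter.Tendsto.eventually_lt_const one_pos Filter.tendsto_id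
      have h2 : ∀ᶠ t in nhdsWithin (0 : ℝ) (Set.Ioi 0), 0 < t :=
        eventually_nhdsWithin_of_forall fun t ht => ht
      filter_upwards [(hev.and h1).filter_mono nhdsWithin_le_nhds, h2] with t ht ht'
      exact ⟨ht.1, ht.2, ht'⟩
    obtain ⟨t, hgt, ht1, ht0⟩ := hev2.exists
    have hcvx := hconv.2 (Set.mem_univ x) (Set.mem_univ y)
      (by linarith : (0:ℝ) ≤ 1 - t) (le_of_lt ht0) (by ring)
    have : h (φ t) < h x := by
      calc h (φ t) ≤ (1 - t) * h x + t * h y := hcvx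
        _ < (1 - t) * h x + t * h x := by nlinarith
        _ = h x := by ring
    exact absurd (hopt (φ t) (le_of_lt hgt)) (not_le.2 this)
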